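/- If C ⊆ F_{q^m}^N is a maximum rank distance code (MRD) with minimum rank distance greater than 1, then m ≥ N. -/

import Mathlib

/-- The matrix representation map with respect to an ordered basis `B`. -/
noncomputable def matrixRep {Fq Fqm : Type*} [Field Fq] [Field Fqm] [Algebra Fq Fqm]
    {m : ℕ} (B : Module.Basis (Fin m) Fq Fqm) {s : Type*} (c : s → Fqm) :
    Matrix (Fin m) s Fq :=
  Matrix.of fun i j => B.repr (c j) i

/-- A matrix whose rows outside the range of an injective map `g` vanish has
rank at most the cardinality of the domain of `g`. -/
theorem rank_le_of_rows_zero {K : Type*} [Field K] {m n r : ℕ}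
    (A : Matrix (Fin m) (Fin n) K) (g : Fin r → Fin m) (hg : Function.Injective g)
    (hz : ∀ i : Fin m, (∀ j, g j ≠ i) → ∀ k, A i k = 0) :
    A.rank ≤ r := by
  classical
  set E : Matrix (Fin m) (Fin r) K := Matrix.of fun i j => if i = g j then (1 : K) else 0 with hE
  have hfac : A = E * A.submatrix g id := by
    funext i k
    rw [Matrix.mul_apply]
    by_cases h : ∃ j, g j = i
    · obtain ⟨j₀, hj₀⟩ := h
      have : ∀ j : Fin r, E i j * A.submatrix g id j k =
          if j = j₀ then A i k else 0 := by
        intro j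
        simp only [hE, Matrix.of_apply, Matrix.submatrix_apply, id]
        by_cases hj : j = j₀
        · subst hj; rw [hj₀]; simp
        · have : i ≠ g j := by
            rw [← hj₀]; intro hc; exact hj (hg hc.symm)
          simp [this, hj]
      rw [Finset.sum_congr rfl fun j _ => this j]
      simp
    · push_neg at h
      have hAi : ∀ k, A i k = 0 := hz i fun j hc => h j hc
      have : ∀ j : Fin r, E i j * A.submatrix g id j k = 0 := by
        intro j
        simp only [hE, Matrix.of_apply, Matrix.submatrix_apply, id]
        by_cases hj : i = g j
        · rw [hj] at hAi ⊢; simp [hAi k]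
        · simp [hj]
      rw [Finset.sum_congr rfl fun j _ => this j, Finset.sum_const_zero, hAi k]
  calc A.rank = (E * A.submatrix g id).rank := by rw [← hfac]
    _ ≤ (A.submatrix g id).rank := Matrix.rank_mul_le_right _ _
    _ ≤ Fintype.card (Fin r) := Matrix.rank_le_card_height _
    _ = r := Fintype.card_fin r

/-- If `C ⊆ Fqm^N` is a maximum rank distance (MRD) code with minimum rank
distance `d > 1`, then `m ≥ N`. -/
theorem mrd_extension_degree_bound {Fq Fqm : Type*} [Field Fq] [Fintype Fq]
    [Field Fqm] [Algebra Fq Fqm] {m N : ℕ} (B : Module.Basis (Fin m) Fq Fqm)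
    (C : Finset (Fin N → Fqm)) (hC : 2 ≤ C.card) (d : ℕ)
    (hd : IsLeast {k | ∃ c ∈ C, ∃ c' ∈ C, c ≠ c' ∧
        (matrixRep B c - matrixRep B c').rank = k} d)
    (hMRD : C.card = (Fintype.card Fq) ^ (m * (N - d + 1)))
    (hd1 : 1 < d) :
    N ≤ m := by
  classical
  obtain ⟨⟨c₀, hc₀, c₀', hc₀', hne₀, hrk₀⟩, hlb⟩ := hd
  -- d ≤ m and d ≤ N
  have hdm : d ≤ m := by
    rw [← hrk₀]
    calc (matrixRep B c₀ - matrixRep B c₀').rank ≤ Fintype.card (Fin m) :=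
      Matrix.rank_le_card_height _
    _ = m := Fintype.card_fin m
  have hdN : d ≤ N := by
    rw [← hrk₀]
    calc (matrixRep B c₀ - matrixRep B c₀').rank ≤ Fintype.card (Fin N) :=
      Matrix.rank_le_card_width _
    _ = N := Fintype.card_fin N
  set a := d - 1 with ha
  have ham : a ≤ m := le_trans (Nat.sub_le _ _) hdm
  -- an injection from C into (m - a) × N matrices
  have hsub : m - a ≤ m := Nat.sub_le _ _
  set f : (Fin N → Fqm) → Matrix (Fin (m - a)) (Fin N) Fq :=
    fun c => (matrixRep B c).submatrix (Fin.castLE hsub) id with hf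
  have hinj : Set.InjOn f C := by
    intro c hc c' hc' hfe
    by_contra hne
    set A := matrixRep B c - matrixRep B c' with hA
    have hge : d ≤ A.rank := hlb ⟨c, hc, c', hc', hne, rfl⟩
    -- rows with index < m - a are zero
    have hle : A.rank ≤ a := by
      refine rank_le_of_rows_zero A (fun j : Fin a => ⟨m - a + j, ?_⟩) ?_ ?_
      · have : (j : ℕ) < a := j.isLt
        omega
      · intro j j' h
        simpa [Fin.ext_iff] using h
      · intro i hi k
        have hilt : (i : ℕ) < m - a := by
          by_contra hge'
          push_neg at hge'
          have hja : (i : ℕ) - (m - a) < a := by omega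
          exact hi ⟨(i : ℕ) - (m - a), hja⟩ (by simp [Fin.ext_iff]; omega)
        have := congrFun (congrFun hfe (⟨i, hilt⟩ : Fin (m - a))) k
        simp only [hf, Matrix.submatrix_apply, id] at this
        have hcast : (Fin.castLE hsub (⟨i, hilt⟩ : Fin (m - a))) = i := by
          simp [Fin.ext_iff]
        rw [hcast] at this
        simp only [matrixRep, Matrix.of_apply] at this
        simp [hA, matrixRep, sub_eq_zero, this]
    omega
  -- counting
  have hcard : C.card ≤ (Fintype.card Fq) ^ ((m - a) * N) := by
    have := Finset.card_le_card_of_injOn f (fun x _ => Finset.mem_univ (f x)) hinj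
    calc C.card ≤ (Finset.univ : Finset (Matrix (Fin (m - a)) (Fin N) Fq)).card := this
      _ = Fintype.card (Matrix (Fin (m - a)) (Fin N) Fq) := rfl
      _ = (Fintype.card Fq) ^ ((m - a) * N) := by
          rw [Fintype.card_eq_nat_card]; show Nat.card (Fin (m - a) → Fin N → Fq) = _
          rw [Nat.card_fun, Nat.card_fun]
          simp [Nat.card_eq_fintype_card, ← pow_mul, Nat.mul_comm]
  have hq : 1 < Fintype.card Fq := Fintype.one_lt_card
  have hexp : m * (N - d + 1) ≤ (m - a) * N := by
    rw [hMRD] at hcard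
    exact (Nat.pow_le_pow_iff_right hq).mp hcard
  -- arithmetic
  have h1 : N - d + 1 = N - a := by omega
  rw [h1] at hexp
  have e1 : m * (N - a) = m * N - m * a := by
    rw [Nat.mul_sub]
  have e2 : (m - a) * N = m * N - a * N := by
    rw [Nat.sub_mul]
  rw [e1, e2] at hexp
  have hma : m * a ≤ m * N := Nat.mul_le_mul_left m (by omega)
  have haN : a * N ≤ m * N := Nat.mul_le_mul_right N ham
  have key : a * N ≤ m * a := by omega
  have ha1 : 1 ≤ a := by omega
  have : a * N ≤ a * m := by rw [Nat.mul_comm m a] at key; exact key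
  exact Nat.le_of_mul_le_mul_left this (by omega)
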